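/- Let f, k, D be positive natural numbers, let b : Fin (f*f) → Matrix (Fin f) (Fin f) ℝ be a linearly independent family of filters, let g : Fin D → Fin (f*f), set h i = b (g i), and let A : Fin k → Fin D → ℝ. Then the linear map from (Fin D → ℝ) to (Fin k → Matrix (Fin f) (Fin f) ℝ) sending w to (fun j => ∑_{i : Fin D} (w i * A j i) • h i) is surjective if and only if for every s : Fin (f*f), the family of vectors (fun j => A j i) for i ∈ {i | g i = s} spans Fin k → ℝ. -/

import Mathlib

/-- Exact characterization underlying Proposition 1: with spatial filters
`h i = b (g i)` that are copies of `f²` linearly independent basis filters `b`, the map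
`w ↦ (fun j => ∑ i, (w i * A j i) • h i)` is surjective iff for every basis filter `s`,
the columns of `A` indexed by the copies of `s` span `ℝᵏ`. -/
theorem structured_init_stmt3
    (f k D : ℕ) (hf : 0 < f) (hk : 0 < k) (hD : 0 < D)
    (b : Fin (f * f) → Matrix (Fin f) (Fin f) ℝ)
    (hb : LinearIndependent ℝ b)
    (g : Fin D → Fin (f * f))
    (h : Fin D → Matrix (Fin f) (Fin f) ℝ)
    (hh : ∀ i : Fin D, h i = b (g i))
    (A : Fin k → Fin D → ℝ) :
    Function.Surjective
        (fun w : Fin D → ℝ =>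
          fun j : Fin k => ∑ i : Fin D, (w i * A j i) • h i)
      ↔ ∀ s : Fin (f * f),
          Submodule.span ℝ
            (Set.range fun i : {i : Fin D // g i = s} => fun j : Fin k => A j i.1) = ⊤ := by
  classical
  -- coefficient comparison from linear independence
  have coeff : ∀ α β : Fin (f * f) → ℝ,
      (∑ t, α t • b t = ∑ t, β t • b t) → α = β := by
    intro α β hEq
    have h0 : ∑ t, (α t - β t) • b t = 0 := by
      simp [sub_smul, Finset.sum_sub_distrib, hEq]
    have hz := Fintype.linearIndependent_iff.mp hb (fun t => α t - β t) h0
    funext t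
    have ht := hz t
    simp only [sub_eq_zero] at ht
    linarith
  constructor
  · intro hsurj s
    rw [eq_top_iff]
    rintro v -
    obtain ⟨w, hw⟩ := hsurj (fun j => v j • b s)
    have key : ∀ j, ∑ i : {i : Fin D // g i = s}, w i.1 * A j i.1 = v j := by
      intro j
      have hj := congrFun hw j
      simp only [hh] at hj
      rw [← Fintype.sum_fiberwise g (fun i => (w i * A j i) • b (g i))] at hj
      have hL : ∀ t : Fin (f * f),
          ∑ i : {i : Fin D // g i = t}, (w i.1 * A j i.1) • b (g i.1)
            = (∑ i : {i : Fin D // g i = t}, w i.1 * A j i.1) • b t := by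
        intro t
        rw [Finset.sum_smul]
        exact Finset.sum_congr rfl fun i _ => by rw [i.2]
      simp only [hL] at hj
      have hR : (v j) • b s = ∑ t, (if t = s then v j else 0) • b t := by
        simp
      rw [hR] at hj
      have := congrFun (coeff _ _ hj) s
      simpa using this
    have hv : v = ∑ i : {i : Fin D // g i = s}, w i.1 • (fun j => A j i.1) := by
      funext j
      rw [← key j]
      simp [Finset.sum_apply]
    rw [hv]
    exact Submodule.sum_mem _ fun i _ =>
      Submodule.smul_mem _ _ (Submodule.subset_span ⟨i, rfl⟩)
  · intro hspan T
    -- express each T j in the basis b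
    haveI : Nonempty (Fin (f * f)) := ⟨⟨0, Nat.mul_pos hf hf⟩⟩
    have hcard : Fintype.card (Fin (f * f)) = Module.finrank ℝ (Matrix (Fin f) (Fin f) ℝ) := by
      simp [Module.finrank_matrix]
    let B : Module.Basis (Fin (f * f)) ℝ (Matrix (Fin f) (Fin f) ℝ) :=
      basisOfLinearIndependentOfCardEqFinrank hb hcard
    have hB : ⇑B = b := coe_basisOfLinearIndependentOfCardEqFinrank hb hcard
    set c : Fin k → Fin (f * f) → ℝ := fun j t => B.repr (T j) t with hc
    have hT : ∀ j, T j = ∑ t, c j t • b t := by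
      intro j
      conv_lhs => rw [← B.sum_repr (T j)]
      simp [hB, hc]
    have hexists : ∀ s : Fin (f * f), ∃ u : {i : Fin D // g i = s} → ℝ,
        ∑ i, u i • (fun j => A j i.1) = fun j => c j s := by
      intro s
      have hmem : (fun j => c j s) ∈ Submodule.span ℝ
          (Set.range fun i : {i : Fin D // g i = s} => fun j : Fin k => A j i.1) := by
        rw [hspan s]; trivial
      exact (Submodule.mem_span_range_iff_exists_fun ℝ).mp hmem
    choose u hu using hexists
    refine ⟨fun i => u (g i) ⟨i, rfl⟩, ?_⟩
    funext j
    simp only [hh]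
    rw [← Fintype.sum_fiberwise g (fun i => (u (g i) ⟨i, rfl⟩ * A j i) • b (g i)), hT j]
    refine Finset.sum_congr rfl fun s _ => ?_
    have e1 : ∀ i : {i : Fin D // g i = s},
        (u (g i.1) ⟨i.1, rfl⟩ * A j i.1) • b (g i.1) = (u s i * A j i.1) • b s := by
      rintro ⟨i, hi⟩
      subst hi
      rfl
    rw [Finset.sum_congr rfl (fun i _ => e1 i), ← Finset.sum_smul]
    congr 1
    have := congrFun (hu s) j
    simpa [Finset.sum_apply] using this
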